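/- Let G be a graph, I a clique in G with |I| ≥ k+1 such that every vertex outside I is adjacent either to at most one vertex of I or to all vertices of I. If G has an independent set S of size k, then the induced subgraph of G obtained by deleting all but k vertices of I (keeping any k of them) still has an independent set of size k. -/

import Mathlib

theorem stmt_17 {V : Type*} [Fintype V] [DecidableEq V] (G : SimpleGraph V)
    [DecidableRel G.Adj] (k : ℕ) (I : Finset V)
    (hclique : ∀ u ∈ I, ∀ v ∈ I, u ≠ v → G.Adj u v) (hIcard : k + 1 ≤ I.card)
    (hdich : ∀ v : V, v ∉ I →
      (I.filter (fun w => G.Adj v w)).card ≤ 1 ∨ ∀ w ∈ I, G.Adj v w)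
    (S : Finset V) (hScard : S.card = k)
    (hSind : ∀ u ∈ S, ∀ v ∈ S, ¬ G.Adj u v)
    (J : Finset V) (hJ : J ⊆ I) (hJcard : J.card = k) :
    ∃ S' : Finset V, S'.card = k ∧ (∀ v ∈ S', v ∈ I → v ∈ J) ∧
      ∀ u ∈ S', ∀ v ∈ S', ¬ G.Adj u v := by
  by_cases h : ∀ v ∈ S, v ∈ I → v ∈ J
  · exact ⟨S, hScard, h, hSind⟩
  push_neg at h
  obtain ⟨w, hwS, hwI, hwJ⟩ := h
  -- every other vertex of S is outside I
  have hout : ∀ v ∈ S.erase w, v ∉ I := by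
    intro v hv hvI
    have hne : v ≠ w := Finset.ne_of_mem_erase hv
    exact hSind v (Finset.mem_of_mem_erase hv) w hwS (hclique v hvI w hwI hne)
  have hfew : ∀ v ∈ S.erase w, (J.filter (fun z => G.Adj v z)).card ≤ 1 := by
    intro v hv
    have hvI := hout v hv
    rcases hdich v hvI with h1 | h2
    · exact le_trans (Finset.card_le_card (Finset.filter_subset_filter _ hJ)) h1
    · exact absurd (h2 w hwI).symm (hSind w hwS v (Finset.mem_of_mem_erase hv))
  set B := (S.erase w).biUnion (fun v => J.filter (fun z => G.Adj v z)) with hB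
  have hBcard : B.card ≤ k - 1 := by
    calc B.card ≤ ∑ v ∈ S.erase w, (J.filter (fun z => G.Adj v z)).card :=
          Finset.card_biUnion_le
    _ ≤ ∑ v ∈ S.erase w, 1 := Finset.sum_le_sum hfew
    _ = (S.erase w).card := by simp
    _ = k - 1 := by rw [Finset.card_erase_of_mem hwS, hScard]
  have hk1 : 1 ≤ k := by
    rw [← hScard]; exact Finset.card_pos.mpr ⟨w, hwS⟩
  have hlt : B.card < J.card := by
    rw [hJcard]; omega
  have hns : ¬ J ⊆ B := fun hs => absurd (Finset.card_le_card hs) (not_le.mpr hlt)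
  obtain ⟨z, hzJ, hzB⟩ := Finset.not_subset.mp hns
  have hznadj : ∀ v ∈ S.erase w, ¬ G.Adj v z := by
    intro v hv hadj
    exact hzB (Finset.mem_biUnion.mpr ⟨v, hv, Finset.mem_filter.mpr ⟨hzJ, hadj⟩⟩)
  have hznS : z ∉ S.erase w := fun hz => hout z hz (hJ hzJ)
  refine ⟨insert z (S.erase w), ?_, ?_, ?_⟩
  · rw [Finset.card_insert_of_notMem hznS, Finset.card_erase_of_mem hwS, hScard]
    omega
  · intro v hv hvI
    rcases Finset.mem_insert.mp hv with rfl | hv'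
    · exact hzJ
    · exact absurd hvI (hout v hv')
  · intro u hu v hv
    rcases Finset.mem_insert.mp hu with rfl | hu' <;>
      rcases Finset.mem_insert.mp hv with rfl | hv'
    · exact G.loopless.irrefl _
    · exact fun hadj => hznadj v hv' hadj.symm
    · exact hznadj u hu'
    · exact hSind u (Finset.mem_of_mem_erase hu') v (Finset.mem_of_mem_erase hv')
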